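/- arXiv:1707.07812 — 2 statements merged into one kernel-verified Lean document; each statement's English description precedes it below -/
import Mathlib

section
/- Let C be a finitely generated abelian group that is a Z[1/p]-module, and let k be an algebraic closure of F_p. Then the group Hom(C, k*) is finite if and only if C has finite torsion, and in that case |Hom(C, k*)| equals the order of the torsion subgroup of C. -/
section AuxDivisible

variable {k : Type*} [Field k] [IsAlgClosed k]

private lemma aux_exists_pow_units (u : kˣ) {n : ℕ} (hn : n ≠ 0) : ∃ z : kˣ, z ^ n = u := by
  obtain ⟨z, hz⟩ := IsAlgClosed.exists_pow_nat_eq (u : k) (Nat.pos_of_ne_zero hn)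
  have hz0 : z ≠ 0 := by
    rintro rfl
    rw [zero_pow hn] at hz
    exact u.ne_zero hz.symm
  exact ⟨Units.mk0 z hz0, Units.ext (by simp [hz])⟩

private lemma aux_exists_zpow_units (u : kˣ) {n : ℤ} (hn : n ≠ 0) : ∃ z : kˣ, z ^ n = u := by
  obtain ⟨z, hz⟩ := aux_exists_pow_units u (Int.natAbs_ne_zero.mpr hn)
  rcases Int.natAbs_eq n with h | h
  · exact ⟨z, by rw [h, zpow_natCast, hz]⟩
  · exact ⟨z⁻¹, by rw [h, zpow_neg, inv_zpow, inv_inv, zpow_natCast, hz]⟩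

noncomputable def auxDivisible : DivisibleBy (Additive kˣ) ℤ where
  div a n :=
    if hn : n = 0 then 0
    else Additive.ofMul (aux_exists_zpow_units (Additive.toMul a) hn).choose
  div_zero a := by simp
  div_cancel {n} a hn := by
    simp only [dif_neg hn]
    rw [← ofMul_zpow]
    rw [(aux_exists_zpow_units (Additive.toMul a) hn).choose_spec]
    rfl

end AuxDivisible

section AuxLoc

variable {p : ℕ}

private lemma aux_powers_le (hp : p.Prime) :
    Submonoid.powers (p : ℤ) ≤ nonZeroDivisors ℤ :=
  powers_le_nonZeroDivisors_of_noZeroDivisors (by exact_mod_cast hp.ne_zero)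

private lemma aux_isDomain (hp : p.Prime) : IsDomain (Localization.Away (p : ℤ)) :=
  IsLocalization.isDomain_localization (aux_powers_le hp)

private lemma aux_algebraMap_inj (hp : p.Prime) :
    Function.Injective (algebraMap ℤ (Localization.Away (p : ℤ))) :=
  IsLocalization.injective _ (aux_powers_le hp)

variable {C : Type*} [AddCommGroup C] [Module (Localization.Away (p : ℤ)) C]

private lemma aux_int_smul (m : ℤ) (x : C) :
    (algebraMap ℤ (Localization.Away (p : ℤ)) m) • x = m • x := by
  rw [eq_intCast (algebraMap ℤ (Localization.Away (p : ℤ))) m, Int.cast_smul_eq_zsmul]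

private lemma aux_unit_smul_inj {q : ℤ}
    (hu : IsUnit (algebraMap ℤ (Localization.Away (p : ℤ)) q)) :
    Function.Injective (fun x : C => q • x) := by
  intro x y h
  simp only [← aux_int_smul (p := p) q] at h
  have h2 := congrArg (fun z => ((hu.unit⁻¹ : _ˣ) : Localization.Away (p : ℤ)) • z) h
  simpa only [smul_smul, IsUnit.val_inv_mul, one_smul,
    (by rw [IsUnit.unit_spec] : ((hu.unit : _ˣ) : Localization.Away (p : ℤ))
        = algebraMap ℤ (Localization.Away (p : ℤ)) q)] using h2

private lemma aux_ppow_unit (j : ℕ) :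
    IsUnit (algebraMap ℤ (Localization.Away (p : ℤ)) ((p : ℤ) ^ j)) :=
  IsLocalization.map_units (Localization.Away (p : ℤ)) ⟨(p : ℤ) ^ j, (show (p:ℤ)^j ∈ Submonoid.powers (p:ℤ) from ⟨j, rfl⟩)⟩

private lemma aux_ppow_smul_inj (j : ℕ) :
    Function.Injective (fun x : C => ((p : ℤ) ^ j) • x) :=
  aux_unit_smul_inj (aux_ppow_unit j)

/-- every point of a torsion module is killed by a nonzero natural number prime to `p`,
uniformly. -/
private lemma aux_exists_nat (hp : p.Prime) [Module.Finite (Localization.Away (p : ℤ)) C]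
    (hT : Module.IsTorsion (Localization.Away (p : ℤ)) C) :
    ∃ n : ℕ, n ≠ 0 ∧ ¬ p ∣ n ∧ ∀ x : C, n • x = 0 := by
  haveI := aux_isDomain hp
  have hne := Submodule.annihilator_top_inter_nonZeroDivisors hT
  obtain ⟨a, haann, ha0⟩ := hne
  have hax : ∀ x : C, a • x = 0 := fun x =>
    Submodule.mem_annihilator.mp haann x Submodule.mem_top
  obtain ⟨⟨m, s⟩, hms⟩ := IsLocalization.surj (Submonoid.powers (p : ℤ)) a
  have hm0 : m ≠ 0 := by
    rintro rfl
    rw [map_zero] at hms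
    have hs0 : (algebraMap ℤ (Localization.Away (p : ℤ))) (s : ℤ) ≠ 0 := by
      intro h
      exact nonZeroDivisors.ne_zero (aux_powers_le hp s.2) (aux_algebraMap_inj hp (by
        rw [h, map_zero]))
    exact hs0 (by
      rcases mul_eq_zero.mp hms with h | h
      · exact absurd h (nonZeroDivisors.ne_zero ha0)
      · exact h)
  have hmx : ∀ x : C, m • x = 0 := by
    intro x
    have : (algebraMap ℤ (Localization.Away (p : ℤ)) m) • x = 0 := by
      rw [← hms, mul_comm, mul_smul, hax, smul_zero]
    rwa [aux_int_smul] at this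
  have hnax : ∀ x : C, (m.natAbs : ℤ) • x = 0 := by
    intro x
    rcases Int.natAbs_eq m with h | h
    · rw [← h]; exact hmx x
    · have : (m.natAbs : ℤ) = -m := by omega
      rw [this, neg_smul, hmx, neg_zero]
  set n₀ := m.natAbs with hn₀
  have hn₀0 : n₀ ≠ 0 := Int.natAbs_ne_zero.mpr hm0
  refine ⟨n₀ / p ^ n₀.factorization p, (Nat.ordCompl_pos p hn₀0).ne', ?_, ?_⟩
  · exact Nat.not_dvd_ordCompl hp hn₀0
  · intro x
    apply aux_ppow_smul_inj (p := p) (n₀.factorization p)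
    show ((p : ℤ) ^ n₀.factorization p) • ((n₀ / p ^ n₀.factorization p) • x)
        = ((p : ℤ) ^ n₀.factorization p) • (0 : C)
    rw [smul_zero, ← natCast_zsmul x (n₀ / p ^ n₀.factorization p), smul_smul,
      ← Nat.cast_pow, ← Nat.cast_mul, Nat.ordProj_mul_ordCompl_eq_self n₀ p]
    exact hnax x

private lemma aux_finite (hp : p.Prime) [Module.Finite (Localization.Away (p : ℤ)) C]
    (hT : Module.IsTorsion (Localization.Away (p : ℤ)) C) : Finite C := by
  obtain ⟨n, hn0, hpn, hnx⟩ := aux_exists_nat hp hT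
  -- an integer `u` acting as the inverse of `p` on `C`
  have hcop : IsCoprime (p : ℤ) (n : ℤ) := by
    rw [Int.isCoprime_iff_gcd_eq_one, Int.gcd_natCast_natCast]
    exact (Nat.Prime.coprime_iff_not_dvd hp).mpr hpn
  obtain ⟨u, v, huv⟩ := hcop
  have hux : ∀ x : C, (u * p) • x = x := by
    intro x
    have h1 : (u * (p : ℤ) + v * (n : ℤ)) • x = x := by rw [huv, one_smul]
    rw [add_smul, mul_smul v (n : ℤ), natCast_zsmul, hnx, smul_zero, add_zero] at h1
    exact h1
  have hpow : ∀ (j : ℕ) (x : C), ((u * p) ^ j) • x = x := by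
    intro j
    induction j with
    | zero => intro x; rw [pow_zero, one_smul]
    | succ j ih =>
      intro x
      rw [pow_succ, mul_smul]
      rw [hux x, ih x]
  -- every scalar of `R` acts on `C` as an integer
  have hact : ∀ r : Localization.Away (p : ℤ), ∃ m : ℤ, ∀ x : C, r • x = m • x := by
    intro r
    obtain ⟨⟨a, s⟩, hrs⟩ := IsLocalization.surj (Submonoid.powers (p : ℤ)) r
    obtain ⟨j, hj⟩ := s.2
    refine ⟨a * u ^ j, fun x => ?_⟩
    apply aux_ppow_smul_inj (p := p) j
    show ((p : ℤ) ^ j) • (r • x) = ((p : ℤ) ^ j) • ((a * u ^ j) • x)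
    have hL : ((p : ℤ) ^ j) • (r • x) = a • x := by
      rw [← aux_int_smul (p := p) ((p : ℤ) ^ j) (r • x), ← mul_smul, mul_comm,
        show (algebraMap ℤ (Localization.Away (p : ℤ))) ((p : ℤ) ^ j)
          = (algebraMap ℤ (Localization.Away (p : ℤ))) (s : ℤ) by rw [show (p:ℤ)^j = (s:ℤ) from hj],
        hrs, aux_int_smul]
    have hR : ((p : ℤ) ^ j) • ((a * u ^ j) • x) = a • x := by
      rw [smul_smul, show (p : ℤ) ^ j * (a * u ^ j) = a * (u * p) ^ j by ring,
        mul_smul, hpow j x]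
    rw [hL, hR]
  -- `C` is finitely generated as an abelian group
  obtain ⟨s, hs⟩ := Module.Finite.fg_top (R := Localization.Away (p : ℤ)) (M := C)
  let S : Submodule (Localization.Away (p : ℤ)) C :=
    { carrier := (AddSubgroup.closure (s : Set C) : Set C)
      add_mem' := fun h1 h2 => AddSubgroup.add_mem _ h1 h2
      zero_mem' := AddSubgroup.zero_mem _
      smul_mem' := by
        intro r x hx
        obtain ⟨m, hm⟩ := hact r
        show r • x ∈ AddSubgroup.closure (s : Set C)
        rw [hm x]
        exact AddSubgroup.zsmul_mem _ hx m }
  have hStop : ∀ x : C, x ∈ AddSubgroup.closure (s : Set C) := by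
    intro x
    have hle : (⊤ : Submodule (Localization.Away (p : ℤ)) C) ≤ S := by
      rw [← hs]
      exact Submodule.span_le.mpr AddSubgroup.subset_closure
    exact hle Submodule.mem_top
  have hFG : AddGroup.FG C :=
    AddGroup.fg_iff.mpr ⟨(s : Set C),
      AddSubgroup.eq_top_iff' _ |>.mpr hStop, s.finite_toSet⟩
  have hTor : AddMonoid.IsTorsion C := fun x =>
    isOfFinAddOrder_iff_nsmul_eq_zero.mpr ⟨n, Nat.pos_of_ne_zero hn0, hnx x⟩
  exact AddCommGroup.finite_of_fg_torsion C hTor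

variable {k : Type*} [Field k] [IsAlgClosed k] [CharP k p]

private lemma aux_equiv (hp : p.Prime) [Module.Finite (Localization.Away (p : ℤ)) C]
    (hT : Module.IsTorsion (Localization.Away (p : ℤ)) C) :
    Nonempty ((C →+ Additive kˣ) ≃ C) := by
  haveI : Finite C := aux_finite hp hT
  obtain ⟨n, hn0, hpn, hnx⟩ := aux_exists_nat hp hT
  have hexp : AddMonoid.exponent C ∣ n :=
    AddMonoid.exponent_dvd_of_forall_nsmul_eq_zero fun g => hnx g
  have hpe : ¬ p ∣ Monoid.exponent (Multiplicative C) := by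
    rw [Monoid.exponent_multiplicative]
    exact fun hd => hpn (hd.trans hexp)
  haveI : NeZero ((Monoid.exponent (Multiplicative C) : k)) :=
    ⟨by rw [Ne, CharP.cast_eq_zero_iff k p]; exact hpe⟩
  obtain ⟨e⟩ := CommGroup.monoidHom_mulEquiv_of_hasEnoughRootsOfUnity (Multiplicative C) k
  exact ⟨(AddMonoidHom.toMultiplicativeLeft).trans <| e.toEquiv.trans Multiplicative.ofAdd.symm⟩

private lemma aux_infinite (hp : p.Prime)
    (hT : ¬ Module.IsTorsion (Localization.Away (p : ℤ)) C) :
    Infinite (C →+ Additive kˣ) := by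
  haveI := aux_isDomain hp
  rw [Module.IsTorsion, not_forall] at hT
  obtain ⟨x, hx⟩ := hT
  rw [not_exists] at hx
  have hxm : ∀ m : ℤ, m ≠ 0 → m • x ≠ 0 := by
    intro m hm0 h
    refine hx ⟨algebraMap ℤ (Localization.Away (p : ℤ)) m,
      mem_nonZeroDivisors_of_ne_zero fun h0 => hm0 (aux_algebraMap_inj hp (by
        rw [h0, map_zero]))⟩ ?_
    show (algebraMap ℤ (Localization.Away (p : ℤ)) m) • x = 0
    rw [aux_int_smul]
    exact h
  letI : DivisibleBy (Additive kˣ) ℤ := auxDivisible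
  have hsurj : Function.Surjective (fun φ : C →+ Additive kˣ => φ x) := by
    intro u
    let f : ℤ →+ C := zmultiplesHom C x
    have hf : Function.Injective f := by
      intro m m' h
      simp only [f, zmultiplesHom_apply] at h
      by_contra hne
      exact hxm (m - m') (sub_ne_zero.mpr hne) (by rw [sub_smul, h, sub_self])
    let g : ℤ →+ Additive kˣ := zmultiplesHom (Additive kˣ) u
    obtain ⟨h, hh⟩ := (Module.Baer.of_divisible _).extension_property_addMonoidHom f hf g
    refine ⟨h, ?_⟩
    have h1 := DFunLike.congr_fun hh 1
    simpa [f, g] using h1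
  haveI : Infinite kˣ := by
    have h0 : (({0} : Set k)ᶜ).Infinite := (Set.finite_singleton 0).infinite_compl
    haveI := h0.to_subtype
    exact Infinite.of_injective (fun a : ↥(({0} : Set k)ᶜ) =>
      Units.mk0 a.1 (Set.mem_compl_singleton_iff.mp a.2)) (by
        intro a b hab
        exact Subtype.ext (by simpa using congrArg Units.val hab))
  haveI : Infinite (Additive kˣ) := ‹Infinite kˣ›
  exact Infinite.of_surjective _ hsurj

end AuxLoc

/-- For a finitely generated `ℤ[1/p]`-module `C` and `k` an algebraic closure of
`F_p`, the group `Hom(C, k*)` is finite iff `C` is torsion (i.e. its free rank is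
zero, so its torsion is all of it and is finite), and in that case `|Hom(C, k*)|`
equals the order of the torsion submodule of `C`. -/
theorem hom_to_units_finite_iff_torsion
    (p : ℕ) (hp : p.Prime)
    (k : Type*) [Field k] [IsAlgClosed k] [CharP k p]
    (C : Type*) [AddCommGroup C]
    [Module (Localization.Away (p : ℤ)) C]
    [Module.Finite (Localization.Away (p : ℤ)) C] :
    (Finite (C →+ Additive kˣ) ↔
      Module.IsTorsion (Localization.Away (p : ℤ)) C) ∧
    (Module.IsTorsion (Localization.Away (p : ℤ)) C →
      Nat.card (C →+ Additive kˣ)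
        = Nat.card (Submodule.torsion (Localization.Away (p : ℤ)) C)) := by
  have hcard : Module.IsTorsion (Localization.Away (p : ℤ)) C →
      Nat.card (C →+ Additive kˣ)
        = Nat.card (Submodule.torsion (Localization.Away (p : ℤ)) C) := by
    intro hT
    obtain ⟨e⟩ := aux_equiv (k := k) hp hT
    have htop : Submodule.torsion (Localization.Away (p : ℤ)) C = ⊤ :=
      (Submodule.isTorsion'_iff_torsion'_eq_top _).mp hT
    rw [Nat.card_congr e, htop]
    exact (Nat.card_congr (Submodule.topEquiv.toEquiv)).symm
  refine ⟨⟨fun hFin => ?_, fun hT => ?_⟩, hcard⟩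
  · by_contra hT
    haveI := aux_infinite (k := k) hp hT
    exact not_finite (C →+ Additive kˣ)
  · obtain ⟨e⟩ := aux_equiv (k := k) hp hT
    haveI : Finite C := aux_finite hp hT
    exact Finite.of_equiv _ e.symm
end

section
/- (Lang's theorem for GL_n over the algebraic closure of a finite field) Let k be an algebraic closure of F_p, q a power of p, and let σ : GL_n(k) → GL_n(k) raise each matrix entry to the q-th power. Then for every A ∈ GL_n(k) there exists B ∈ GL_n(k) with A = B^{-1} σ(B). -/
open Polynomial in
/-- Every element of an algebraically closed field is `μ ^ q - μ` for some `μ`, when `2 ≤ q`. -/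
lemma lang_exists_pow_sub {k : Type*} [Field k] [IsAlgClosed k] {q : ℕ} (hq : 2 ≤ q) (c : k) :
    ∃ μ : k, μ ^ q - μ = c := by
  have hdeg : degree ((X : k[X]) + C c) < degree ((X : k[X]) ^ q) := by
    refine lt_of_le_of_lt (degree_add_le _ _) ?_
    rw [degree_X_pow, degree_X]
    refine max_lt (by exact_mod_cast Nat.lt_of_lt_of_le one_lt_two hq) ?_
    have h0 : (0 : WithBot ℕ) < (q : ℕ) := by exact_mod_cast (show (0:ℕ) < q by omega)
    exact lt_of_le_of_lt degree_C_le h0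
  have hd : degree ((X : k[X]) ^ q - (X + C c)) = q := by
    rw [degree_sub_eq_left_of_degree_lt hdeg, degree_X_pow]
  obtain ⟨μ, hμ⟩ := IsAlgClosed.exists_root ((X : k[X]) ^ q - (X + C c))
    (by rw [hd]; exact_mod_cast (by omega : q ≠ 0))
  refine ⟨μ, ?_⟩
  have := hμ
  simp only [IsRoot, eval_sub, eval_pow, eval_X, eval_add, eval_C] at this
  linear_combination this

open Polynomial in
lemma lang_exists_c {p : ℕ} (hp : p.Prime) {ν : ℕ} (hν : 1 ≤ ν)
    {k : Type*} [Field k] [IsAlgClosed k] [CharP k p]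
    (a : ℕ → k) (m : ℕ) (hm : 1 ≤ m) (ha : ∃ j, j < m ∧ a j ≠ 0) :
    ∃ c : k, c ≠ 0 ∧ ∃ cc : ℕ → k, cc (m-1) = c ∧ cc 0 = a 0 * c ^ p ^ ν ∧
      ∀ i, cc (i+1) = cc i ^ p ^ ν + a (i+1) * c ^ p ^ ν := by
  classical
  haveI := Fact.mk hp
  set q := p ^ ν with hqdef
  have hq2 : 2 ≤ q := by
    calc 2 ≤ p := hp.two_le
    _ = p ^ 1 := (pow_one p).symm
    _ ≤ p ^ ν := Nat.pow_le_pow_right hp.pos hν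
  have hqk : ((q : ℕ) : k) = 0 := by
    rw [CharP.cast_eq_zero_iff k p q]
    exact dvd_pow_self p (by omega)
  let D : ℕ → k[X] := fun i =>
    Nat.rec (C (a 0) * X ^ q) (fun i Di => Di ^ q + C (a (i + 1)) * X ^ q) i
  have hfrob : ∀ (s : Finset ℕ) (f : ℕ → k[X]), (∑ i ∈ s, f i) ^ q = ∑ i ∈ s, f i ^ q := by
    intro s f
    rw [hqdef]
    exact sum_pow_char_pow (p := p) (n := ν) s f
  have hD0 : D 0 = C (a 0) * X ^ q := rfl
  have hDs : ∀ i, D (i + 1) = D i ^ q + C (a (i + 1)) * X ^ q := fun i => rfl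
  -- closed form
  have hclosed : ∀ j, D j = ∑ i ∈ Finset.range (j + 1),
      C (a (j - i) ^ q ^ i) * X ^ q ^ (i + 1) := by
    intro j
    induction j with
    | zero => simp [hD0]
    | succ j ih =>
      rw [hDs, ih, hfrob]
      rw [Finset.sum_range_succ' (fun i => C (a (j + 1 - i) ^ q ^ i) * X ^ q ^ (i + 1))]
      congr 1
      · refine Finset.sum_congr rfl fun i _ => ?_
        have h1 : j + 1 - (i + 1) = j - i := by omega
        rw [h1, mul_pow, ← C_pow, ← pow_mul (a (j - i)) (q ^ i) q, ← pow_mul X (q ^ (i + 1)) q,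
          ← pow_succ q i, ← pow_succ q (i + 1)]
      · simp
  -- derivative is zero
  have hDer : ∀ j, derivative (D j) = 0 := by
    intro j
    induction j with
    | zero =>
      rw [hD0, derivative_C_mul, derivative_X_pow, hqk]
      simp
    | succ j ih =>
      rw [hDs, derivative_add, derivative_pow, ih, derivative_C_mul, derivative_X_pow, hqk]
      simp
  obtain ⟨j0, hj0m, hj0⟩ := ha
  have hj0le : j0 ≤ m - 1 := by omega
  set i0 := m - 1 - j0 with hi0
  set e := q ^ (i0 + 1) with he
  have hcoeffD : (D (m - 1)).coeff e = a j0 ^ q ^ i0 := by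
    rw [hclosed (m - 1), finset_sum_coeff]
    rw [Finset.sum_eq_single i0]
    · rw [coeff_C_mul, coeff_X_pow, if_pos rfl, mul_one]
      congr 2
      omega
    · intro i _ hii
      rw [coeff_C_mul, coeff_X_pow, if_neg, mul_zero]
      intro hcon
      exact hii (by
        have := Nat.pow_right_injective hq2 hcon
        omega)
    · intro hni
      exact absurd (Finset.mem_range.2 (by omega)) hni
  set P : k[X] := D (m - 1) - X with hP
  have he2 : 2 ≤ e := by
    calc 2 ≤ q := hq2
    _ = q ^ 1 := (pow_one q).symm
    _ ≤ q ^ (i0 + 1) := Nat.pow_le_pow_right (by omega) (by omega)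
  have hPcoeff : P.coeff e ≠ 0 := by
    rw [hP, coeff_sub, hcoeffD]
    have : (X : k[X]).coeff e = 0 := by
      rw [← pow_one (X : k[X]), coeff_X_pow, if_neg (by omega)]
    rw [this, sub_zero]
    exact pow_ne_zero _ hj0
  have hPne : P ≠ 0 := fun h => hPcoeff (by rw [h]; simp)
  have hPdeg : 2 ≤ P.natDegree := le_trans he2 (le_natDegree_of_ne_zero hPcoeff)
  have hPder : derivative P = -1 := by
    rw [hP, derivative_sub, hDer, derivative_X, zero_sub]
  have hsep : P.Separable := ⟨0, -1, by rw [hPder]; ring⟩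
  have hcard : Multiset.card P.roots = P.natDegree :=
    (splits_iff_card_roots).mp (IsAlgClosed.splits P)
  have hnodup : P.roots.Nodup := nodup_roots hsep
  have hex : ∃ c ∈ P.roots, c ≠ 0 := by
    by_contra h
    push_neg at h
    have hsub : P.roots.toFinset ⊆ {0} := by
      intro x hx
      rw [Multiset.mem_toFinset] at hx
      simp [h x hx]
    have h1 : P.roots.toFinset.card ≤ 1 := le_trans (Finset.card_le_card hsub) (by simp)
    rw [Multiset.toFinset_card_eq_card_iff_nodup.mpr hnodup, hcard] at h1
    omega
  obtain ⟨c, hcr, hc0⟩ := hex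
  have hceval : (D (m - 1)).eval c = c := by
    have := (mem_roots'.mp hcr).2
    rw [hP] at this
    simp only [IsRoot, eval_sub, eval_X] at this
    linear_combination this
  refine ⟨c, hc0, fun i => (D i).eval c, hceval, ?_, ?_⟩
  · show (D 0).eval c = _
    rw [hD0]; simp
  · intro i
    show (D (i + 1)).eval c = (D i).eval c ^ q + a (i + 1) * c ^ q
    rw [hDs]
    simp

/-- The `σ`-semilinear map `v ↦ A · σ(v)` on `k^n`. -/
noncomputable def flang {k : Type*} [Field k] {n : ℕ} (σ : k →+* k)
    (A : Matrix (Fin n) (Fin n) k) : (Fin n → k) →ₛₗ[σ] (Fin n → k) where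
  toFun v := A.mulVec fun i => σ (v i)
  map_add' v w := by
    show A.mulVec (fun i => σ ((v + w) i))
      = A.mulVec (fun i => σ (v i)) + A.mulVec (fun i => σ (w i))
    have h : (fun i => σ ((v + w) i)) = (fun i => σ (v i)) + fun i => σ (w i) := by
      funext i; simp
    rw [h, Matrix.mulVec_add]
  map_smul' c v := by
    show A.mulVec (fun i => σ ((c • v) i)) = σ c • A.mulVec (fun i => σ (v i))
    have h : (fun i => σ ((c • v) i)) = σ c • fun i => σ (v i) := by
      funext i; simp [smul_eq_mul]
    rw [h, Matrix.mulVec_smul]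

lemma lang_span {p : ℕ} (hp : p.Prime) {ν : ℕ} (hν : 1 ≤ ν)
    {k : Type*} [Field k] [IsAlgClosed k] [CharP k p] {n : ℕ}
    {σ : k →+* k} (hσ : ∀ x : k, σ x = x ^ p ^ ν) (A : GL (Fin n) k) :
    Submodule.span k {v : Fin n → k | flang σ (A : Matrix (Fin n) (Fin n) k) v = v} = ⊤ := by
  classical
  set q := p ^ ν with hqdef
  have hq2 : 2 ≤ q := by
    calc 2 ≤ p := hp.two_le
    _ = p ^ 1 := (pow_one p).symm
    _ ≤ p ^ ν := Nat.pow_le_pow_right hp.pos hν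
  set F := flang σ (A : Matrix (Fin n) (Fin n) k) with hFdef
  set S := {v : Fin n → k | F v = v} with hSdef
  set W := Submodule.span k S with hWdef
  have hSW : S ⊆ (W : Set (Fin n → k)) := Submodule.subset_span
  -- injectivity of F
  have hFinj : Function.Injective F := by
    intro x y hxy
    have h1 : (A : Matrix (Fin n) (Fin n) k).mulVec (fun i => σ (x i))
        = (A : Matrix (Fin n) (Fin n) k).mulVec (fun i => σ (y i)) := hxy
    have h3 := congrArg (fun z : Fin n → k =>
      ((A⁻¹ : GL (Fin n) k) : Matrix (Fin n) (Fin n) k).mulVec z) h1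
    simp only [Matrix.mulVec_mulVec] at h3
    rw [show ((A⁻¹ : GL (Fin n) k) : Matrix (Fin n) (Fin n) k)
        * (A : Matrix (Fin n) (Fin n) k) = 1 from A.inv_mul, Matrix.one_mulVec,
      Matrix.one_mulVec] at h3
    funext i
    exact σ.injective (congrFun h3 i)
  have hFsmul : ∀ (d : k) (x : Fin n → k), F (d • x) = d ^ q • F x := by
    intro d x
    rw [map_smulₛₗ, hσ d]
  -- forward stability
  have hWF : ∀ x ∈ W, F x ∈ W := by
    intro x hx
    refine Submodule.span_induction (p := fun x _ => F x ∈ W) ?_ ?_ ?_ ?_ hx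
    · intro u hu
      show F u ∈ W
      rw [show F u = u from hu]
      exact hSW hu
    · show F 0 ∈ W
      rw [map_zero]; exact W.zero_mem
    · intro x y _ _ hx hy
      show F (x + y) ∈ W
      rw [map_add]; exact W.add_mem hx hy
    · intro c x _ hcx
      show F (c • x) ∈ W
      rw [map_smulₛₗ]; exact W.smul_mem _ hcx
  -- roots
  have hroot : ∀ r : k, ∃ t : k, t ^ q = r := fun r =>
    IsAlgClosed.exists_pow_nat_eq r (by omega)
  choose rt hrt using hroot
  choose st hst using fun r : k => lang_exists_pow_sub hq2 r
  -- backward stability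
  have hpre : ∀ x, F x ∈ W → x ∈ W := by
    intro x hx
    obtain ⟨c, hcsup, hcsum⟩ := Submodule.mem_span_set.mp hx
    have hwW : (∑ u ∈ c.support, rt (c u) • u) ∈ W :=
      Submodule.sum_mem _ fun u hu => Submodule.smul_mem _ _ (hSW (hcsup hu))
    have hFw : F (∑ u ∈ c.support, rt (c u) • u) = F x := by
      rw [map_sum, ← hcsum, Finsupp.sum]
      refine Finset.sum_congr rfl fun u hu => ?_
      have huS : F u = u := hcsup hu
      rw [hFsmul, huS, hrt]
    have := hFinj hFw
    rwa [← this]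
  -- surjectivity of F - id on W
  have hFsub : ∀ z ∈ W, ∃ w ∈ W, F w - w = z := by
    intro z hz
    obtain ⟨c, hcsup, hcsum⟩ := Submodule.mem_span_set.mp hz
    refine ⟨∑ u ∈ c.support, st (c u) • u,
      Submodule.sum_mem _ fun u hu => Submodule.smul_mem _ _ (hSW (hcsup hu)), ?_⟩
    rw [map_sum, ← Finset.sum_sub_distrib, ← hcsum, Finsupp.sum]
    refine Finset.sum_congr rfl fun u hu => ?_
    have huS : F u = u := hcsup hu
    rw [hFsmul, huS, ← sub_smul, hst]
  -- main argument
  by_contra hne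
  obtain ⟨v, hv⟩ : ∃ v, v ∉ W := by
    by_contra hall
    push_neg at hall
    exact hne (Submodule.eq_top_iff'.mpr hall)
  set g : ℕ → (Fin n → k) := fun j => (fun x => F x)^[j] v with hgdef
  have hg0 : g 0 = v := rfl
  have hgs : ∀ j, g (j + 1) = F (g j) := fun j => Function.iterate_succ_apply' _ j v
  set Pj : ℕ → Prop := fun j =>
    g j ∈ W ⊔ Submodule.span k (Set.range fun i : Fin j => g i.val) with hPjdef
  have hex : ∃ j, Pj j := by
    by_cases hli : LinearIndependent k fun i : Fin (n + 1) => g i.val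
    · exfalso
      have h1 := hli.fintype_card_le_finrank
      rw [Module.finrank_pi, Fintype.card_fin, Fintype.card_fin] at h1
      omega
    · obtain ⟨b, hbsum, i1, hi1⟩ := Fintype.not_linearIndependent_iff.mp hli
      set s := Finset.univ.filter (fun i : Fin (n + 1) => b i ≠ 0) with hs
      have hsne : s.Nonempty := ⟨i1, by simp [hs, hi1]⟩
      set i0 := s.max' hsne with hi0
      have hbi0 : b i0 ≠ 0 := (Finset.mem_filter.mp (s.max'_mem hsne)).2
      refine ⟨i0.val, Submodule.mem_sup_right ?_⟩
      have hsum2 : b i0 • g i0.val = -∑ i ∈ Finset.univ.erase i0, b i • g i.val := by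
        have h2 := hbsum
        rw [← Finset.add_sum_erase _ _ (Finset.mem_univ i0)] at h2
        exact eq_neg_of_add_eq_zero_left h2
      have hmem : ∀ i ∈ Finset.univ.erase i0, b i • g i.val ∈
          Submodule.span k (Set.range fun i' : Fin i0.val => g i'.val) := by
        intro i hi
        rcases eq_or_ne (b i) 0 with h0 | h0
        · rw [h0, zero_smul]; exact Submodule.zero_mem _
        · have hile : i ≤ i0 := s.le_max' i (by simp [hs, h0])
          have hine : i ≠ i0 := (Finset.mem_erase.mp hi).1
          have hilt : (i : ℕ) < i0.val := Fin.lt_def.mp (lt_of_le_of_ne hile hine)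
          exact Submodule.smul_mem _ _ (Submodule.subset_span ⟨⟨i.val, hilt⟩, rfl⟩)
      have h4 : b i0 • g i0.val ∈
          Submodule.span k (Set.range fun i' : Fin i0.val => g i'.val) := by
        rw [hsum2]
        exact Submodule.neg_mem _ (Submodule.sum_mem _ hmem)
      have h5 := Submodule.smul_mem _ (b i0)⁻¹ h4
      rwa [smul_smul, inv_mul_cancel₀ hbi0, one_smul] at h5
  set m := Nat.find hex with hmdef
  have hPm : Pj m := Nat.find_spec hex
  have hmin : ∀ j, j < m → ¬ Pj j := fun j hj => Nat.find_min hex hj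
  have hm1 : 1 ≤ m := by
    rcases Nat.eq_zero_or_pos m with h0 | h
    · exfalso
      have hP0 := hPm
      rw [h0] at hP0
      apply hv
      have hempty : (Set.range fun i : Fin 0 => g i.val) = ∅ := Set.range_eq_empty _
      rw [hPjdef] at hP0
      simpa [hempty, hg0] using hP0
    · exact h
  obtain ⟨w0, hw0W, s1, hs1, hgm⟩ := Submodule.mem_sup.mp hPm
  obtain ⟨aa, haa⟩ := (Submodule.mem_span_range_iff_exists_fun k).mp hs1
  set a' : ℕ → k := fun j => if h : j < m then aa ⟨j, h⟩ else 0 with ha'def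
  have hgm' : g m = w0 + ∑ i ∈ Finset.range m, a' i • g i := by
    have h6 : ∑ i ∈ Finset.range m, a' i • g i = ∑ i : Fin m, aa i • g i.val := by
      rw [Finset.sum_range]
      refine Finset.sum_congr rfl fun i _ => ?_
      rw [ha'def]
      simp [i.isLt]
    rw [h6, haa, hgm]
  have hdesc : ∀ j, g j ∈ W → v ∈ W := by
    intro j
    induction j with
    | zero => intro h; rwa [hg0] at h
    | succ j ih =>
      intro h
      rw [hgs j] at h
      exact ih (hpre _ h)
  have ha'ne : ∃ j, j < m ∧ a' j ≠ 0 := by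
    by_contra hno
    push_neg at hno
    have hz : ∀ i ∈ Finset.range m, a' i • g i = 0 := fun i hi => by
      rw [hno i (Finset.mem_range.mp hi), zero_smul]
    have hgmW : g m ∈ W := by
      rw [hgm', Finset.sum_eq_zero hz, add_zero]
      exact hw0W
    exact hv (hdesc m hgmW)
  obtain ⟨c, hc0, cc, hccm, hcc0, hccs⟩ := lang_exists_c hp hν a' m hm1 ha'ne
  rw [← hqdef] at hcc0 hccs
  obtain ⟨w, hwW, hwsub⟩ := hFsub (-(c ^ q • w0))
    (Submodule.neg_mem _ (Submodule.smul_mem _ _ hw0W))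
  set T := ∑ i ∈ Finset.range m, cc i • g i with hTdef
  set u := w + T with hudef
  set m' := m - 1 with hm'def
  have hmm : m = m' + 1 := by omega
  have hccm' : cc m' = c := hccm
  have hFT : F T = c ^ q • w0 + T := by
    have h1 : F T = ∑ i ∈ Finset.range m, cc i ^ q • g (i + 1) := by
      rw [hTdef, map_sum]
      exact Finset.sum_congr rfl fun i _ => by rw [hFsmul, hgs]
    have h2 : ∑ i ∈ Finset.range m, cc i ^ q • g (i + 1)
        = (∑ i ∈ Finset.range m', cc i ^ q • g (i + 1)) + c ^ q • g m := by
      rw [hmm, Finset.sum_range_succ, hccm', ← hmm]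
    have h3 : c ^ q • g m = c ^ q • w0 + ∑ i ∈ Finset.range m, (c ^ q * a' i) • g i := by
      rw [hgm', smul_add, Finset.smul_sum]
      congr 1
      exact Finset.sum_congr rfl fun i _ => by rw [smul_smul]
    have hsplit : ∑ i ∈ Finset.range m, (c ^ q * a' i) • g i
        = (∑ i ∈ Finset.range m', (c ^ q * a' (i + 1)) • g (i + 1)) + (c ^ q * a' 0) • g 0 := by
      rw [hmm, Finset.sum_range_succ']
    have h4 : T = (∑ i ∈ Finset.range m', cc i ^ q • g (i + 1))
        + ∑ i ∈ Finset.range m, (c ^ q * a' i) • g i := by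
      calc T = (∑ i ∈ Finset.range m', cc (i + 1) • g (i + 1)) + cc 0 • g 0 := by
            rw [hTdef, hmm, Finset.sum_range_succ']
        _ = (∑ i ∈ Finset.range m', (cc i ^ q • g (i + 1) + (c ^ q * a' (i + 1)) • g (i + 1)))
            + (c ^ q * a' 0) • g 0 := by
            congr 1
            · refine Finset.sum_congr rfl fun i _ => ?_
              rw [hccs i, add_smul, mul_comm (a' (i + 1))]
            · rw [hcc0, mul_comm]
        _ = ((∑ i ∈ Finset.range m', cc i ^ q • g (i + 1))
            + ∑ i ∈ Finset.range m', (c ^ q * a' (i + 1)) • g (i + 1))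
            + (c ^ q * a' 0) • g 0 := by
            rw [Finset.sum_add_distrib]
        _ = (∑ i ∈ Finset.range m', cc i ^ q • g (i + 1))
            + ∑ i ∈ Finset.range m, (c ^ q * a' i) • g i := by
            rw [hsplit]; abel
    rw [h1, h2, h3, h4]
    abel
  have hFu : F u = u := by
    rw [hudef, map_add, hFT, sub_eq_iff_eq_add.mp hwsub]
    abel
  have huS : u ∈ S := hFu
  have huW : u ∈ W := hSW huS
  have hTW : T ∈ W := by
    have h7 := Submodule.sub_mem W huW hwW
    rwa [hudef, add_sub_cancel_left] at h7
  have hPm' : Pj m' := by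
    rw [hPjdef]
    have hsplitT : T = (∑ i ∈ Finset.range m', cc i • g i) + c • g m' := by
      rw [hTdef, hmm, Finset.sum_range_succ, hccm']
    have h6 : (∑ i ∈ Finset.range m', cc i • g i) ∈
        Submodule.span k (Set.range fun i : Fin m' => g i.val) :=
      Submodule.sum_mem _ fun i hi => Submodule.smul_mem _ _
        (Submodule.subset_span ⟨⟨i, Finset.mem_range.mp hi⟩, rfl⟩)
    have h8 : c • g m' = T - ∑ i ∈ Finset.range m', cc i • g i := by
      rw [hsplitT]; abel
    have h5 : c • g m' ∈ W ⊔ Submodule.span k (Set.range fun i : Fin m' => g i.val) := by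
      rw [h8]
      exact Submodule.sub_mem _ (Submodule.mem_sup_left hTW) (Submodule.mem_sup_right h6)
    have h9 := Submodule.smul_mem _ c⁻¹ h5
    rwa [smul_smul, inv_mul_cancel₀ hc0, one_smul] at h9
  exact hmin m' (by omega) hPm'

/-- Lang's theorem for `GL_n` over the algebraic closure of a finite field:
if `σ` raises each matrix entry to the `q`-th power (`q = p^ν`), then every
`A ∈ GL_n(k)` can be written `A = B⁻¹ σ(B)`. -/
theorem lang_theorem_GL
    (p : ℕ) (hp : p.Prime) (ν : ℕ) (hν : 1 ≤ ν) (n : ℕ)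
    (k : Type*) [Field k] [IsAlgClosed k] [CharP k p]
    (σ : k →+* k) (hσ : ∀ x : k, σ x = x ^ p ^ ν)
    (A : GL (Fin n) k) :
    ∃ B : GL (Fin n) k,
      A = B⁻¹ * Units.map ((σ.mapMatrix :
        Matrix (Fin n) (Fin n) k →+* Matrix (Fin n) (Fin n) k) :
        Matrix (Fin n) (Fin n) k →* Matrix (Fin n) (Fin n) k) B := by
  classical
  have hspan := lang_span hp hν hσ A
  obtain ⟨t, htS, htspan, htli⟩ := exists_linearIndependent k
    {v : Fin n → k | flang σ (A : Matrix (Fin n) (Fin n) k) v = v}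
  rw [hspan] at htspan
  have hble : ⊤ ≤ Submodule.span k (Set.range ((↑) : t → (Fin n → k))) := by
    rw [Subtype.range_coe, htspan]
  let b0 : Module.Basis t k (Fin n → k) := Module.Basis.mk htli hble
  haveI : Fintype t := FiniteDimensional.fintypeBasisIndex b0
  have hcard : Fintype.card t = n := by
    have h1 := Module.finrank_eq_card_basis b0
    rw [Module.finrank_pi, Fintype.card_fin] at h1
    omega
  let e : Fin n ≃ t := (Fintype.equivFinOfCardEq hcard).symm
  let b : Module.Basis (Fin n) k (Fin n → k) := b0.reindex e.symm
  have hb : ∀ j, (b j : Fin n → k) ∈ t := by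
    intro j
    have : b j = b0 (e j) := by
      rw [Module.Basis.reindex_apply, Equiv.symm_symm]
    rw [this, Module.Basis.mk_apply]
    exact (e j).2
  have hbfix : ∀ j, (A : Matrix (Fin n) (Fin n) k).mulVec (fun i => σ (b j i)) = b j :=
    fun j => htS (hb j)
  let C : Matrix (Fin n) (Fin n) k := (Pi.basisFun k (Fin n)).toMatrix b
  haveI : Invertible C := (Pi.basisFun k (Fin n)).invertibleToMatrix b
  have hCij : ∀ i j, C i j = b j i := by
    intro i j
    simp [C, Module.Basis.toMatrix_apply]
  have hC : (A : Matrix (Fin n) (Fin n) k) * C.map σ = C := by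
    ext i j
    rw [Matrix.mul_apply]
    have : ∀ l, (A : Matrix (Fin n) (Fin n) k) i l * (C.map σ) l j
        = (A : Matrix (Fin n) (Fin n) k) i l * σ (b j l) := by
      intro l
      rw [Matrix.map_apply, hCij]
    rw [Finset.sum_congr rfl fun l _ => this l, hCij]
    have := congrFun (hbfix j) i
    rw [← this]
    rfl
  let uC : GL (Fin n) k := unitOfInvertible C
  let Mσ : Matrix (Fin n) (Fin n) k →* Matrix (Fin n) (Fin n) k :=
    ((σ.mapMatrix : Matrix (Fin n) (Fin n) k →+* Matrix (Fin n) (Fin n) k) :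
      Matrix (Fin n) (Fin n) k →* Matrix (Fin n) (Fin n) k)
  have key : A * Units.map Mσ uC = uC := by
    apply Units.ext
    show (A : Matrix (Fin n) (Fin n) k) * Mσ (uC : Matrix (Fin n) (Fin n) k) = C
    have : Mσ (uC : Matrix (Fin n) (Fin n) k) = C.map σ := by
      show σ.mapMatrix C = C.map σ
      rw [RingHom.mapMatrix_apply]
    rw [this, hC]
  refine ⟨uC⁻¹, ?_⟩
  rw [inv_inv, map_inv, eq_mul_inv_iff_mul_eq]
  exact key
end
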